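/- arXiv:2310.14647 — 2 statements merged into one kernel-verified Lean document; each statement's English description precedes it below -/
import Mathlib

section
/- For every n ≥ 2, the second power of the path satisfies γᵢ(P_n²) ≥ 3·⌊n/8⌋. -/
open Finset

open scoped Classical

noncomputable section

namespace IndicatedDom

variable {V : Type*} [Fintype V]

/-- Closed neighborhood `N[v]` as a `Finset`. -/
def cnbhd (G : SimpleGraph V) (v : V) : Finset V :=
  insert v (G.neighborFinset v)

/-- `D` is a dominating set of `G`. -/
def Dominates (G : SimpleGraph V) (D : Finset V) : Prop :=
  ∀ u, ∃ v ∈ D, u ∈ cnbhd G v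

/-- The set of vertices not dominated by `D`. -/
def undom (G : SimpleGraph V) (D : Finset V) : Finset V :=
  univ.filter fun u => ∀ v ∈ D, u ∉ cnbhd G v

/-- Game value of the indicated domination game with a fuel parameter:
given the set `D` of vertices selected so far, Dominator indicates an
undominated vertex `u` (minimizing), Staller selects a vertex of `N[u]`
(maximizing); each selection counts one. -/
def giAux (G : SimpleGraph V) : ℕ → Finset V → ℕ
  | 0, _ => 0
  | (fuel+1), D =>
    if h : (undom G D).Nonempty then
      (undom G D).inf' h fun u =>
        (cnbhd G u).sup' ⟨u, Finset.mem_insert_self u _⟩ fun v => giAux G fuel (insert v D) + 1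
    else 0

/-- The indicated domination number `γᵢ(G)`. -/
def indicatedDomNum (G : SimpleGraph V) : ℕ :=
  giAux G (Fintype.card V) ∅

/-- Game value of the standard domination game with a fuel parameter:
`dom = true` means it is Dominator's turn (minimizing); legal moves are
vertices dominating at least one new vertex. -/
def gameAux (G : SimpleGraph V) : ℕ → Bool → Finset V → ℕ
  | 0, _, _ => 0
  | (fuel+1), dom, D =>
    if h : (univ.filter fun v => ∃ u ∈ cnbhd G v, u ∈ undom G D).Nonempty then
      if dom then
        (univ.filter fun v => ∃ u ∈ cnbhd G v, u ∈ undom G D).inf' h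
          fun v => gameAux G fuel false (insert v D) + 1
      else
        (univ.filter fun v => ∃ u ∈ cnbhd G v, u ∈ undom G D).sup' h
          fun v => gameAux G fuel true (insert v D) + 1
    else 0

/-- The game domination number `γ_g(G)` (Dominator starts). -/
def gameDomNum (G : SimpleGraph V) : ℕ :=
  gameAux G (Fintype.card V) true ∅

/-- A minimal dominating set. -/
def IsMinimalDominating (G : SimpleGraph V) (D : Finset V) : Prop :=
  Dominates G D ∧ ∀ D' ⊂ D, ¬ Dominates G D'

/-- The upper domination number `Γ(G)`. -/
def upperDomNum (G : SimpleGraph V) : ℕ :=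
  sSup {k | ∃ D : Finset V, IsMinimalDominating G D ∧ D.card = k}

/-- A dominating (Grundy) sequence: every vertex dominates something new,
and the whole sequence dominates `G`. -/
def IsDominatingSeq (G : SimpleGraph V) (l : List V) : Prop :=
  (∀ i : Fin l.length, ∃ u, u ∈ cnbhd G (l.get i) ∧
      ∀ j : Fin l.length, (j : ℕ) < (i : ℕ) → u ∉ cnbhd G (l.get j)) ∧
    Dominates G l.toFinset

/-- The Grundy domination number `γ_gr(G)`. -/
def grundyDomNum (G : SimpleGraph V) : ℕ :=
  sSup {k | ∃ l : List V, IsDominatingSeq G l ∧ l.length = k}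

/-- The independence number `α(G)`. -/
def indepNum (G : SimpleGraph V) : ℕ :=
  sSup {k | ∃ S : Finset V, (∀ x ∈ S, ∀ y ∈ S, ¬ G.Adj x y) ∧ S.card = k}

/-- `S` is irredundant: every `x ∈ S` has a private neighbor w.r.t. `S`. -/
def Irredundant (G : SimpleGraph V) (S : Finset V) : Prop :=
  ∀ x ∈ S, ∃ w, (∃ v ∈ S, w ∈ cnbhd G v) ∧ ¬ ∃ v ∈ S.erase x, w ∈ cnbhd G v

/-- The upper irredundance number `IR(G)`. -/
def upperIrredNum (G : SimpleGraph V) : ℕ :=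
  sSup {k | ∃ S : Finset V, Irredundant G S ∧ (∀ T, S ⊂ T → ¬ Irredundant G T) ∧ S.card = k}

/-- The star `K_{1,n}` with center `0`. -/
def starGraph (n : ℕ) : SimpleGraph (Fin (n+1)) where
  Adj a b := a ≠ b ∧ (a = 0 ∨ b = 0)
  symm := by constructor; intro a b h; exact ⟨h.1.symm, h.2.symm⟩
  loopless := by constructor; intro a h; exact h.1 rfl

/-- Two copies of `K_n` with a matching joining corresponding vertices of
index `≥ 1` (i.e. `K_n □ K₂` minus the matching edge at index `0`). -/
def Hgraph (n : ℕ) : SimpleGraph (Fin n × Bool) where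
  Adj a b := (a.2 = b.2 ∧ a.1 ≠ b.1) ∨ (a.2 ≠ b.2 ∧ a.1 = b.1 ∧ (a.1 : ℕ) ≠ 0)
  symm := by
    constructor
    rintro ⟨i, s⟩ ⟨j, t⟩ (⟨h1, h2⟩ | ⟨h1, h2, h3⟩)
    · exact Or.inl ⟨h1.symm, h2.symm⟩
    · exact Or.inr ⟨h1.symm, h2.symm, h2 ▸ h3⟩
  loopless := by constructor; rintro ⟨i, s⟩ (⟨_, h⟩ | ⟨h, _⟩) <;> exact h rfl

/-- The `k`-th power of the path on `n` vertices: `i ~ j` iff `1 ≤ |i-j| ≤ k`. -/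
def pathPow (n k : ℕ) : SimpleGraph (Fin n) where
  Adj i j := i ≠ j ∧ (i : ℕ) ≤ (j : ℕ) + k ∧ (j : ℕ) ≤ (i : ℕ) + k
  symm := by constructor; intro i j h; exact ⟨h.1.symm, h.2.2, h.2.1⟩
  loopless := by constructor; intro i h; exact h.1 rfl

/-- The cycle on `m` vertices (for `m ≥ 3`), modeled on `ZMod m`. -/
def cyc (m : ℕ) : SimpleGraph (ZMod m) where
  Adj i j := i ≠ j ∧ (i + 1 = j ∨ j + 1 = i)
  symm := by constructor; intro i j h; exact ⟨h.1.symm, h.2.symm⟩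
  loopless := by constructor; intro i h; exact h.1 rfl

/-- The graph `D₁`: a `9`-cycle `x₁x₂…x₉` plus chords `x₁x₃, x₄x₆, x₇x₉`
(vertex `xᵢ` is represented by `i - 1 : ZMod 9`). -/
def DGraph : SimpleGraph (ZMod 9) where
  Adj i j := i ≠ j ∧ (i + 1 = j ∨ j + 1 = i ∨
    (i = 0 ∧ j = 2) ∨ (i = 2 ∧ j = 0) ∨ (i = 3 ∧ j = 5) ∨ (i = 5 ∧ j = 3) ∨
    (i = 6 ∧ j = 8) ∨ (i = 8 ∧ j = 6))
  symm := by constructor; intro i j h; refine ⟨h.1.symm, ?_⟩; tauto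
  loopless := by constructor; intro i h; exact h.1 rfl


/-! ### Auxiliary material for the lower bound -/

lemma mem_undom_iff {G : SimpleGraph V} {D : Finset V} {u : V} :
    u ∈ undom G D ↔ ∀ v ∈ D, u ∉ cnbhd G v := by simp [undom]

lemma mem_cnbhd_comm {G : SimpleGraph V} {u v : V} :
    u ∈ cnbhd G v ↔ v ∈ cnbhd G u := by
  simp only [cnbhd, mem_insert, SimpleGraph.mem_neighborFinset]
  constructor
  · rintro (h | h)
    · exact Or.inl h.symm
    · exact Or.inr h.symm
  · rintro (h | h)
    · exact Or.inl h.symm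
    · exact Or.inr h.symm

lemma mem_undom_insert' {G : SimpleGraph V} {D D' : Finset V} {v u : V}
    (hD' : ∀ w, w ∈ D' ↔ w = v ∨ w ∈ D) :
    u ∈ undom G D' ↔ u ∈ undom G D ∧ u ∉ cnbhd G v := by
  simp only [mem_undom_iff, hD']
  constructor
  · intro h
    exact ⟨fun w hw => h w (Or.inr hw), h v (Or.inl rfl)⟩
  · rintro ⟨h1, h2⟩ w hw
    rcases hw with rfl | hw
    · exact h2
    · exact h1 w hw

/-- Master lemma: a Staller potential function gives a lower bound on `giAux`. -/
lemma staller_lb (G : SimpleGraph V) (Φ : Finset V → ℕ)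
    (h1 : ∀ D, Φ D ≤ (undom G D).card)
    (h2 : ∀ D : Finset V, ∀ u ∈ undom G D, ∃ v ∈ cnbhd G u,
      ∀ D' : Finset V, (∀ w, w ∈ D' ↔ w = v ∨ w ∈ D) → Φ D ≤ Φ D' + 1) :
    ∀ fuel (D : Finset V), (undom G D).card ≤ fuel → Φ D ≤ giAux G fuel D := by
  intro fuel
  induction fuel with
  | zero =>
    intro D hD
    have h := h1 D
    simp only [giAux]
    omega
  | succ fuel ih =>
    intro D hD
    rw [giAux]
    split_ifs with h
    · refine Finset.le_inf' h _ fun u hu => ?_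
      obtain ⟨v, hv, hΦ⟩ := h2 D u hu
      have hins : ∀ w : V, w ∈ insert v D ↔ w = v ∨ w ∈ D := fun w => Finset.mem_insert
      have hsub : undom G (insert v D) ⊆ undom G D :=
        fun w hw => ((mem_undom_insert' hins).mp hw).1
      have hu' : u ∉ undom G (insert v D) := by
        intro hc
        exact ((mem_undom_insert' hins).mp hc).2 (mem_cnbhd_comm.mpr hv)
      have hlt : (undom G (insert v D)).card < (undom G D).card :=
        Finset.card_lt_card (Finset.ssubset_iff_of_subset hsub |>.mpr ⟨u, hu, hu'⟩)
      have hrec : Φ (insert v D) ≤ giAux G fuel (insert v D) := ih (insert v D) (by omega)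
      calc Φ D ≤ Φ (insert v D) + 1 := hΦ (insert v D) hins
        _ ≤ giAux G fuel (insert v D) + 1 := by omega
        _ ≤ _ := Finset.le_sup' (fun w => giAux G fuel (insert w D) + 1) hv
    · have h1' := h1 D
      have hemp : undom G D = ∅ := not_nonempty_iff_eq_empty.mp h
      rw [hemp] at h1'
      simpa using h1'

/-- The per-block value function. -/
def gg (c : ℕ) : ℕ := if c ≤ 1 then c else if c ≤ 3 then 2 else 3

/-- Indicator that position `x` is an undominated vertex. -/
def indD (n : ℕ) (D : Finset (Fin n)) (x : ℕ) : ℕ :=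
  if h : x < n then (if (⟨x, h⟩ : Fin n) ∈ undom (pathPow n 2) D then 1 else 0) else 0

/-- Number of undominated vertices among positions `8k+2, …, 8k+5`. -/
def cblk (n : ℕ) (D : Finset (Fin n)) (k : ℕ) : ℕ :=
  indD n D (8*k+2) + indD n D (8*k+3) + indD n D (8*k+4) + indD n D (8*k+5)

/-- The Staller potential for `P_n²`. -/
def Phi (n : ℕ) (D : Finset (Fin n)) : ℕ :=
  ∑ k ∈ Finset.range (n/8), gg (cblk n D k)

lemma gg_le (c : ℕ) : gg c ≤ c := by unfold gg; split_ifs <;> omega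

lemma indD_le_one (n : ℕ) (D : Finset (Fin n)) (x : ℕ) : indD n D x ≤ 1 := by
  unfold indD; split_ifs <;> omega

lemma mem_cnbhd_pathPow {n : ℕ} {a b : Fin n} :
    b ∈ cnbhd (pathPow n 2) a ↔ (a : ℕ) ≤ (b : ℕ) + 2 ∧ (b : ℕ) ≤ (a : ℕ) + 2 := by
  simp only [cnbhd, mem_insert, SimpleGraph.mem_neighborFinset]
  have hadj : (pathPow n 2).Adj a b ↔ a ≠ b ∧ (a : ℕ) ≤ (b : ℕ) + 2 ∧ (b : ℕ) ≤ (a : ℕ) + 2 :=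
    Iff.rfl
  rw [hadj]
  constructor
  · rintro (rfl | ⟨_, h⟩)
    · omega
    · exact h
  · intro h
    by_cases hab : a = b
    · exact Or.inl hab.symm
    · exact Or.inr ⟨hab, h⟩

lemma indD_insert_le (n : ℕ) (D D' : Finset (Fin n)) (v : Fin n)
    (hD' : ∀ w, w ∈ D' ↔ w = v ∨ w ∈ D) (x : ℕ) :
    indD n D' x ≤ indD n D x := by
  by_cases h : x < n
  · simp only [indD, dif_pos h]
    have hsub : undom (pathPow n 2) D' ⊆ undom (pathPow n 2) D :=
      fun w hw => ((mem_undom_insert' hD').mp hw).1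
    by_cases h1 : (⟨x, h⟩ : Fin n) ∈ undom (pathPow n 2) D'
    · simp [h1, hsub h1]
    · simp [h1]
  · simp [indD, h]

lemma indD_insert_far (n : ℕ) (D D' : Finset (Fin n)) (v : Fin n)
    (hD' : ∀ w, w ∈ D' ↔ w = v ∨ w ∈ D) (x : ℕ)
    (hfar : ¬((v : ℕ) ≤ x + 2 ∧ x ≤ (v : ℕ) + 2)) :
    indD n D' x = indD n D x := by
  by_cases h : x < n
  · simp only [indD, dif_pos h]
    have hmem : (⟨x, h⟩ : Fin n) ∈ undom (pathPow n 2) D' ↔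
        (⟨x, h⟩ : Fin n) ∈ undom (pathPow n 2) D := by
      rw [mem_undom_insert' hD']
      constructor
      · exact fun hm => hm.1
      · intro hm
        refine ⟨hm, fun hc => hfar ?_⟩
        have := mem_cnbhd_pathPow.mp hc
        simpa using this
    simp only [hmem]
  · simp [indD, h]

lemma indD_empty (n : ℕ) (x : ℕ) (h : x < n) : indD n (∅ : Finset (Fin n)) x = 1 := by
  simp [indD, h, mem_undom_iff]

lemma Phi_le_card (n : ℕ) (D : Finset (Fin n)) :
    Phi n D ≤ (undom (pathPow n 2) D).card := by
  have h1 : Phi n D ≤ ∑ k ∈ Finset.range (n/8), cblk n D k :=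
    Finset.sum_le_sum fun k _ => gg_le _
  have hdisj : (↑(Finset.range (n/8)) : Set ℕ).PairwiseDisjoint
      (fun k => ({8*k+2, 8*k+3, 8*k+4, 8*k+5} : Finset ℕ)) := by
    intro a _ b _ hab
    simp only [Function.onFun]
    rw [Finset.disjoint_left]
    intro x hx hx2
    simp only [Finset.mem_insert, Finset.mem_singleton] at hx hx2
    omega
  have h2 : ∑ k ∈ Finset.range (n/8), cblk n D k =
      ∑ x ∈ (Finset.range (n/8)).biUnion
          (fun k => ({8*k+2, 8*k+3, 8*k+4, 8*k+5} : Finset ℕ)), indD n D x := by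
    rw [Finset.sum_biUnion hdisj]
    refine Finset.sum_congr rfl fun k _ => ?_
    have e : ∑ x ∈ ({8*k+2, 8*k+3, 8*k+4, 8*k+5} : Finset ℕ), indD n D x =
        indD n D (8*k+2) + (indD n D (8*k+3) + (indD n D (8*k+4) + indD n D (8*k+5))) := by
      rw [Finset.sum_insert (by intro hc; simp only [Finset.mem_insert,
          Finset.mem_singleton] at hc; omega),
        Finset.sum_insert (by intro hc; simp only [Finset.mem_insert,
          Finset.mem_singleton] at hc; omega),
        Finset.sum_insert (by intro hc; simp only [Finset.mem_singleton] at hc; omega),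
        Finset.sum_singleton]
    rw [e]
    unfold cblk
    omega
  have h3 : ∑ x ∈ (Finset.range (n/8)).biUnion
        (fun k => ({8*k+2, 8*k+3, 8*k+4, 8*k+5} : Finset ℕ)), indD n D x ≤
      ∑ x ∈ Finset.range n, indD n D x := by
    apply Finset.sum_le_sum_of_subset
    intro x hx
    simp only [Finset.mem_biUnion, Finset.mem_range, Finset.mem_insert,
      Finset.mem_singleton] at hx ⊢
    obtain ⟨k, hk, hx⟩ := hx
    omega
  have h4 : ∑ x ∈ Finset.range n, indD n D x = (undom (pathPow n 2) D).card := by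
    rw [← Fin.sum_univ_eq_sum_range (indD n D) n]
    have e : ∀ i : Fin n, indD n D (↑i) =
        if i ∈ undom (pathPow n 2) D then 1 else 0 := by
      intro i
      simp [indD, i.isLt]
    rw [Finset.sum_congr rfl fun i _ => e i]
    rw [Finset.sum_boole]
    simp only [Nat.cast_id]
    congr 1
    ext x
    simp
  omega

lemma cblk_empty (n : ℕ) (k : ℕ) (hk : k < n/8) : cblk n (∅ : Finset (Fin n)) k = 4 := by
  have h8 : 8 * (n/8) ≤ n := Nat.mul_div_le n 8
  unfold cblk
  rw [indD_empty n _ (by omega), indD_empty n _ (by omega),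
    indD_empty n _ (by omega), indD_empty n _ (by omega)]

lemma Phi_empty (n : ℕ) : Phi n (∅ : Finset (Fin n)) = 3 * (n/8) := by
  unfold Phi
  rw [Finset.sum_congr rfl fun k hk => by rw [cblk_empty n k (Finset.mem_range.mp hk)]]
  rw [Finset.sum_const, smul_eq_mul, Finset.card_range]
  have : gg 4 = 3 := by norm_num [gg]
  rw [this, Nat.mul_comm]

lemma Phi_step (n : ℕ) (D D' : Finset (Fin n)) (v : Fin n)
    (hD' : ∀ w, w ∈ D' ↔ w = v ∨ w ∈ D) (b : ℕ) (hb : b < n/8)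
    (hfar : ∀ k, k < n/8 → k ≠ b → ∀ j, 2 ≤ j → j ≤ 5 →
      ¬((v : ℕ) ≤ 8*k+j+2 ∧ 8*k+j ≤ (v : ℕ)+2))
    (hblk : gg (cblk n D b) ≤ gg (cblk n D' b) + 1) :
    Phi n D ≤ Phi n D' + 1 := by
  unfold Phi
  rw [← Finset.sum_erase_add (Finset.range (n/8)) (fun k => gg (cblk n D k))
      (Finset.mem_range.mpr hb),
    ← Finset.sum_erase_add (Finset.range (n/8)) (fun k => gg (cblk n D' k))
      (Finset.mem_range.mpr hb)]
  have heq : ∑ k ∈ (Finset.range (n/8)).erase b, gg (cblk n D' k)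
      = ∑ k ∈ (Finset.range (n/8)).erase b, gg (cblk n D k) := by
    refine Finset.sum_congr rfl fun k hk => ?_
    have hk1 : k < n/8 := Finset.mem_range.mp (Finset.mem_of_mem_erase hk)
    have hk2 : k ≠ b := Finset.ne_of_mem_erase hk
    unfold cblk
    rw [indD_insert_far n D D' v hD' _ (hfar k hk1 hk2 2 (by omega) (by omega)),
      indD_insert_far n D D' v hD' _ (hfar k hk1 hk2 3 (by omega) (by omega)),
      indD_insert_far n D D' v hD' _ (hfar k hk1 hk2 4 (by omega) (by omega)),
      indD_insert_far n D D' v hD' _ (hfar k hk1 hk2 5 (by omega) (by omega))]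
  rw [heq]
  omega

/-- Staller's strategy: for every indicated vertex there is a reply losing
at most one unit of potential. -/
lemma exists_staller (n : ℕ) (D : Finset (Fin n)) (u : Fin n) :
    ∃ v ∈ cnbhd (pathPow n 2) u,
      ∀ D' : Finset (Fin n), (∀ w, w ∈ D' ↔ w = v ∨ w ∈ D) →
        Phi n D ≤ Phi n D' + 1 := by
  have h8 : 8 * (n/8) ≤ n := Nat.mul_div_le n 8
  by_cases htail : 8 * (n/8) ≤ (u : ℕ)
  · -- tail: reply `u` itself, no tracked position is touched
    refine ⟨u, mem_cnbhd_pathPow.mpr (by omega), fun D' hD' => ?_⟩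
    have hfar : ∀ k, k < n/8 → ∀ j, 2 ≤ j → j ≤ 5 →
        ¬((u : ℕ) ≤ 8*k+j+2 ∧ 8*k+j ≤ (u : ℕ)+2) := by
      intro k hk j hj1 hj2
      omega
    have heq : Phi n D' = Phi n D := by
      unfold Phi
      refine Finset.sum_congr rfl fun k hk => ?_
      have hk1 : k < n/8 := Finset.mem_range.mp hk
      unfold cblk
      rw [indD_insert_far n D D' u hD' _ (hfar k hk1 2 (by omega) (by omega)),
        indD_insert_far n D D' u hD' _ (hfar k hk1 3 (by omega) (by omega)),
        indD_insert_far n D D' u hD' _ (hfar k hk1 4 (by omega) (by omega)),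
        indD_insert_far n D D' u hD' _ (hfar k hk1 5 (by omega) (by omega))]
    omega
  · have hu : (u : ℕ) < 8 * (n/8) := by omega
    have hkm : (u : ℕ) / 8 < n / 8 := by omega
    set k : ℕ := (u : ℕ) / 8 with hkdef
    have hn8 : 8 * k + 8 ≤ n := by omega
    have hur : (u : ℕ) = 8*k + (u : ℕ) % 8 ∧ (u : ℕ) % 8 < 8 := by omega
    set r : ℕ := (u : ℕ) % 8 with hrdef
    have hi2 := indD_le_one n D (8*k+2)
    have hi3 := indD_le_one n D (8*k+3)
    have hi4 := indD_le_one n D (8*k+4)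
    have hi5 := indD_le_one n D (8*k+5)
    by_cases hr2 : r ≤ 2
    · -- reply `8k`, touching only position `8k+2`
      refine ⟨⟨8*k, by omega⟩, mem_cnbhd_pathPow.mpr (by constructor <;> simp <;> omega),
        fun D' hD' => ?_⟩
      set v : Fin n := ⟨8*k, by omega⟩ with hvdef
      have hv : (v : ℕ) = 8*k := rfl
      refine Phi_step n D D' v hD' k hkm (by intro k' h1 h2 j h3 h4; rw [hv]; omega) ?_
      unfold cblk
      rw [indD_insert_far n D D' v hD' (8*k+3) (by rw [hv]; omega),
        indD_insert_far n D D' v hD' (8*k+4) (by rw [hv]; omega),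
        indD_insert_far n D D' v hD' (8*k+5) (by rw [hv]; omega)]
      have hle := indD_insert_le n D D' v hD' (8*k+2)
      unfold gg
      split_ifs <;> omega
    · by_cases hr3 : r = 3
      · by_cases hI : 0 < indD n D (8*k+4) + indD n D (8*k+5)
        · -- reply `8k+1`, touching positions `8k+2, 8k+3`
          refine ⟨⟨8*k+1, by omega⟩,
            mem_cnbhd_pathPow.mpr (by constructor <;> simp <;> omega),
            fun D' hD' => ?_⟩
          set v : Fin n := ⟨8*k+1, by omega⟩ with hvdef
          have hv : (v : ℕ) = 8*k+1 := rfl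
          refine Phi_step n D D' v hD' k hkm (by intro k' h1 h2 j h3 h4; rw [hv]; omega) ?_
          unfold cblk
          rw [indD_insert_far n D D' v hD' (8*k+4) (by rw [hv]; omega),
            indD_insert_far n D D' v hD' (8*k+5) (by rw [hv]; omega)]
          have hle2 := indD_insert_le n D D' v hD' (8*k+2)
          have hle3 := indD_insert_le n D D' v hD' (8*k+3)
          unfold gg
          split_ifs <;> omega
        · -- reply `8k+5`, positions `8k+4, 8k+5` are already dominated
          refine ⟨⟨8*k+5, by omega⟩,
            mem_cnbhd_pathPow.mpr (by constructor <;> simp <;> omega),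
            fun D' hD' => ?_⟩
          set v : Fin n := ⟨8*k+5, by omega⟩ with hvdef
          have hv : (v : ℕ) = 8*k+5 := rfl
          refine Phi_step n D D' v hD' k hkm (by intro k' h1 h2 j h3 h4; rw [hv]; omega) ?_
          unfold cblk
          rw [indD_insert_far n D D' v hD' (8*k+2) (by rw [hv]; omega)]
          have hle3 := indD_insert_le n D D' v hD' (8*k+3)
          have hle4 := indD_insert_le n D D' v hD' (8*k+4)
          have hle5 := indD_insert_le n D D' v hD' (8*k+5)
          unfold gg
          split_ifs <;> omega
      · by_cases hr4 : r = 4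
        · by_cases hI : 0 < indD n D (8*k+2) + indD n D (8*k+3)
          · -- reply `8k+6`, touching positions `8k+4, 8k+5`
            refine ⟨⟨8*k+6, by omega⟩,
              mem_cnbhd_pathPow.mpr (by constructor <;> simp <;> omega),
              fun D' hD' => ?_⟩
            set v : Fin n := ⟨8*k+6, by omega⟩ with hvdef
            have hv : (v : ℕ) = 8*k+6 := rfl
            refine Phi_step n D D' v hD' k hkm
              (by intro k' h1 h2 j h3 h4; rw [hv]; omega) ?_
            unfold cblk
            rw [indD_insert_far n D D' v hD' (8*k+2) (by rw [hv]; omega),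
              indD_insert_far n D D' v hD' (8*k+3) (by rw [hv]; omega)]
            have hle4 := indD_insert_le n D D' v hD' (8*k+4)
            have hle5 := indD_insert_le n D D' v hD' (8*k+5)
            unfold gg
            split_ifs <;> omega
          · -- reply `8k+2`, positions `8k+2, 8k+3` are already dominated
            refine ⟨⟨8*k+2, by omega⟩,
              mem_cnbhd_pathPow.mpr (by constructor <;> simp <;> omega),
              fun D' hD' => ?_⟩
            set v : Fin n := ⟨8*k+2, by omega⟩ with hvdef
            have hv : (v : ℕ) = 8*k+2 := rfl
            refine Phi_step n D D' v hD' k hkm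
              (by intro k' h1 h2 j h3 h4; rw [hv]; omega) ?_
            unfold cblk
            rw [indD_insert_far n D D' v hD' (8*k+5) (by rw [hv]; omega)]
            have hle2 := indD_insert_le n D D' v hD' (8*k+2)
            have hle3 := indD_insert_le n D D' v hD' (8*k+3)
            have hle4 := indD_insert_le n D D' v hD' (8*k+4)
            unfold gg
            split_ifs <;> omega
        · -- r ≥ 5 : reply `8k+7`, touching only position `8k+5`
          refine ⟨⟨8*k+7, by omega⟩,
            mem_cnbhd_pathPow.mpr (by constructor <;> simp <;> omega),
            fun D' hD' => ?_⟩
          set v : Fin n := ⟨8*k+7, by omega⟩ with hvdef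
          have hv : (v : ℕ) = 8*k+7 := rfl
          refine Phi_step n D D' v hD' k hkm (by intro k' h1 h2 j h3 h4; rw [hv]; omega) ?_
          unfold cblk
          rw [indD_insert_far n D D' v hD' (8*k+2) (by rw [hv]; omega),
            indD_insert_far n D D' v hD' (8*k+3) (by rw [hv]; omega),
            indD_insert_far n D D' v hD' (8*k+4) (by rw [hv]; omega)]
          have hle := indD_insert_le n D D' v hD' (8*k+5)
          unfold gg
          split_ifs <;> omega

/-- `γᵢ(P_n²) ≥ 3 ⋅ ⌊n/8⌋` for every `n ≥ 2`. -/
theorem stmt14 (n : ℕ) (hn : 2 ≤ n) :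
    3 * (n / 8) ≤ indicatedDomNum (pathPow n 2) := by
  have hcard : (undom (pathPow n 2) (∅ : Finset (Fin n))).card ≤ Fintype.card (Fin n) :=
    le_trans (Finset.card_le_univ _) (le_of_eq Finset.card_univ)
  have key := staller_lb (pathPow n 2) (Phi n) (Phi_le_card n)
    (fun D u _ => exists_staller n D u) (Fintype.card (Fin n)) ∅ hcard
  rw [Phi_empty n] at key
  exact key

end IndicatedDom
end
end

section
/- If G is a bipartite graph, then α(G) = Γ(G) = IR(G), i.e., the independence number, the upper domination number, and the upper irredundance number coincide. -/
open Finset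

open scoped Classical

noncomputable section

namespace IndicatedDom

variable {V : Type*} [Fintype V]

section CFPT
variable (G : SimpleGraph V)

lemma mem_cnbhd {u v : V} : u ∈ cnbhd G v ↔ u = v ∨ G.Adj v u := by
  simp [cnbhd, SimpleGraph.mem_neighborFinset]

lemma adj_mem_cnbhd {u v : V} (h : G.Adj v u) : u ∈ cnbhd G v :=
  (mem_cnbhd G).2 (Or.inr h)

lemma bddI : BddAbove {k | ∃ S : Finset V, (∀ x ∈ S, ∀ y ∈ S, ¬ G.Adj x y) ∧ S.card = k} := by
  refine ⟨Fintype.card V, ?_⟩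
  rintro k ⟨S, -, rfl⟩
  exact S.card_le_univ

lemma bddG : BddAbove {k | ∃ D : Finset V, IsMinimalDominating G D ∧ D.card = k} := by
  refine ⟨Fintype.card V, ?_⟩
  rintro k ⟨S, -, rfl⟩
  exact S.card_le_univ

lemma bddIR : BddAbove {k | ∃ S : Finset V, Irredundant G S ∧
    (∀ T, S ⊂ T → ¬ Irredundant G T) ∧ S.card = k} := by
  refine ⟨Fintype.card V, ?_⟩
  rintro k ⟨S, -, -, rfl⟩
  exact S.card_le_univ

lemma indep_le {S : Finset V} (hS : ∀ x ∈ S, ∀ y ∈ S, ¬ G.Adj x y) :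
    S.card ≤ indepNum G := le_csSup (bddI G) ⟨S, hS, rfl⟩

lemma exists_max_indep : ∃ S : Finset V,
    (∀ x ∈ S, ∀ y ∈ S, ¬ G.Adj x y) ∧ S.card = indepNum G := by
  have h := Nat.sSup_mem (s := {k | ∃ S : Finset V,
      (∀ x ∈ S, ∀ y ∈ S, ¬ G.Adj x y) ∧ S.card = k}) ⟨0, ∅, by simp, by simp⟩ (bddI G)
  obtain ⟨S, h1, h2⟩ := h
  exact ⟨S, h1, h2⟩

lemma alpha_le_Gamma : indepNum G ≤ upperDomNum G := by
  obtain ⟨S, hind, hcard⟩ := exists_max_indep G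
  have hdom : Dominates G S := by
    intro u
    by_cases hu : u ∈ S
    · exact ⟨u, hu, mem_insert_self u _⟩
    · by_contra hc
      push_neg at hc
      have hind' : ∀ x ∈ insert u S, ∀ y ∈ insert u S, ¬ G.Adj x y := by
        intro x hx y hy hadj
        rcases mem_insert.1 hx with rfl | hx'
        · rcases mem_insert.1 hy with rfl | hy'
          · exact G.loopless.irrefl _ hadj
          · exact hc y hy' (adj_mem_cnbhd G hadj.symm)
        · rcases mem_insert.1 hy with rfl | hy'
          · exact hc x hx' (adj_mem_cnbhd G hadj)
          · exact hind x hx' y hy' hadj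
      have h2 : (insert u S).card ≤ indepNum G := indep_le G hind'
      rw [card_insert_of_notMem hu, hcard] at h2
      omega
  have hmin : IsMinimalDominating G S := by
    refine ⟨hdom, ?_⟩
    intro D' hD' hdom'
    obtain ⟨x, hxS, hxD⟩ := exists_of_ssubset hD'
    obtain ⟨v, hv, hxv⟩ := hdom' x
    rcases (mem_cnbhd G).1 hxv with rfl | hadj
    · exact hxD hv
    · exact hind v (hD'.1 hv) x hxS hadj
  rw [← hcard]
  exact le_csSup (bddG G) ⟨S, hmin, rfl⟩

lemma Gamma_le_IR : upperDomNum G ≤ upperIrredNum G := by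
  apply csSup_le'
  rintro k ⟨D, ⟨hdom, hmin⟩, rfl⟩
  have hirr : Irredundant G D := by
    intro x hx
    have h1 : ¬ Dominates G (D.erase x) := hmin _ (erase_ssubset hx)
    unfold Dominates at h1
    push_neg at h1
    obtain ⟨u, hu⟩ := h1
    obtain ⟨v, hv, huv⟩ := hdom u
    have hvx : v = x := by
      by_contra h
      exact hu v (mem_erase.2 ⟨h, hv⟩) huv
    refine ⟨u, ⟨v, hv, huv⟩, ?_⟩
    rintro ⟨v', hv', h'⟩
    exact hu v' (hvx ▸ hv') h'
  have hmax : ∀ T, D ⊂ T → ¬ Irredundant G T := by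
    intro T hT hirrT
    obtain ⟨x, hxT, hxD⟩ := exists_of_ssubset hT
    obtain ⟨w, -, hw2⟩ := hirrT x hxT
    obtain ⟨v, hv, hwv⟩ := hdom w
    exact hw2 ⟨v, mem_erase.2 ⟨fun h => hxD (h ▸ hv), hT.1 hv⟩, hwv⟩
  exact le_csSup (bddIR G) ⟨D, hirr, hmax, rfl⟩

lemma IR_le_alpha (hbip : G.Colorable 2) : upperIrredNum G ≤ indepNum G := by
  apply csSup_le'
  rintro k ⟨S, hirr, -, rfl⟩
  obtain ⟨c⟩ := hbip
  have hw : ∀ x ∈ S, ∃ w, w ∈ cnbhd G x ∧ ∀ v ∈ S, v ≠ x → w ∉ cnbhd G v := by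
    intro x hx
    obtain ⟨w, ⟨v, hv, hwv⟩, h2⟩ := hirr x hx
    have h2' : ∀ v' ∈ S, v' ≠ x → w ∉ cnbhd G v' := by
      intro v' hv' hne hmem
      exact h2 ⟨v', mem_erase.2 ⟨hne, hv'⟩, hmem⟩
    have hvx : v = x := by
      by_contra h
      exact h2' v hv h hwv
    exact ⟨w, hvx ▸ hwv, h2'⟩
  choose! w hw1 hw2 using hw
  set f : V → V := fun x => if w x ≠ x ∧ c x = 0 then w x else x with hf
  have efp : ∀ x, (w x ≠ x ∧ c x = 0) → f x = w x := fun x h => by rw [hf]; exact if_pos h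
  have efn : ∀ x, ¬(w x ≠ x ∧ c x = 0) → f x = x := fun x h => by rw [hf]; exact if_neg h
  have hwS : ∀ x ∈ S, ∀ v ∈ S, v ≠ x → w x ≠ v := by
    intro x hx v hv hne h
    exact hw2 x hx v hv hne ((mem_cnbhd G).2 (Or.inl h))
  have hadj : ∀ x ∈ S, w x ≠ x → G.Adj x (w x) := by
    intro x hx hne
    rcases (mem_cnbhd G).1 (hw1 x hx) with h | h
    · exact absurd h hne
    · exact h
  have fin2 : ∀ a b : Fin 2, a ≠ b → a = 0 → b = 1 := by decide
  have fin2' : ∀ a : Fin 2, a ≠ 0 → a = 1 := by decide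
  have hcol : ∀ x ∈ S, w x ≠ x → c x = 0 → c (w x) = 1 := fun x hx h1 h2 =>
    fin2 _ _ (c.valid (hadj x hx h1)) h2
  have hinj : Set.InjOn f ↑S := by
    intro x hx y hy hxy
    rw [Finset.mem_coe] at hx hy
    by_contra hne
    by_cases ex : w x ≠ x ∧ c x = 0 <;> by_cases ey : w y ≠ y ∧ c y = 0
    · rw [efp x ex, efp y ey] at hxy
      exact hw2 y hy x hx hne (hxy ▸ hw1 x hx)
    · rw [efp x ex, efn y ey] at hxy
      exact hwS x hx y hy (fun h => hne h.symm) hxy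
    · rw [efn x ex, efp y ey] at hxy
      exact hwS y hy x hx hne hxy.symm
    · rw [efn x ex, efn y ey] at hxy
      exact hne hxy
  have hT : ∀ a ∈ S.image f, ∀ b ∈ S.image f, ¬ G.Adj a b := by
    intro a ha b hb hab
    obtain ⟨x, hx, rfl⟩ := mem_image.1 ha
    obtain ⟨y, hy, rfl⟩ := mem_image.1 hb
    by_cases hne : x = y
    · subst hne
      exact G.loopless.irrefl _ hab
    · by_cases ex : w x ≠ x ∧ c x = 0 <;> by_cases ey : w y ≠ y ∧ c y = 0
      · rw [efp x ex, efp y ey] at hab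
        exact c.valid hab (by rw [hcol x hx ex.1 ex.2, hcol y hy ey.1 ey.2])
      · rw [efp x ex, efn y ey] at hab
        exact hw2 x hx y hy (fun h => hne h.symm) (adj_mem_cnbhd G hab.symm)
      · rw [efn x ex, efp y ey] at hab
        exact hw2 y hy x hx hne (adj_mem_cnbhd G hab)
      · rw [efn x ex, efn y ey] at hab
        push_neg at ex ey
        by_cases hx0 : w x = x
        · have h1 : x ∈ cnbhd G y := adj_mem_cnbhd G hab.symm
          rw [← hx0] at h1
          exact hw2 x hx y hy (fun h => hne h.symm) h1
        · by_cases hy0 : w y = y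
          · have h1 : y ∈ cnbhd G x := adj_mem_cnbhd G hab
            rw [← hy0] at h1
            exact hw2 y hy x hx hne h1
          · exact c.valid hab (by rw [fin2' _ (ex hx0), fin2' _ (ey hy0)])
  calc S.card = (S.image f).card := (card_image_of_injOn hinj).symm
    _ ≤ indepNum G := indep_le G hT

end CFPT

/-- if `G` is bipartite, then `α(G) = Γ(G) = IR(G)`. -/
theorem stmt16 {V : Type*} [Fintype V] (G : SimpleGraph V) (hbip : G.Colorable 2) :
    indepNum G = upperDomNum G ∧ upperDomNum G = upperIrredNum G := by
  have ha := alpha_le_Gamma G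
  have hb := Gamma_le_IR G
  have hc := IR_le_alpha G hbip
  exact ⟨le_antisymm ha (hb.trans hc), le_antisymm hb (hc.trans ha)⟩

end IndicatedDom
end
end
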